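/- arXiv:1709.10061 — 4 statements merged into one kernel-verified Lean document; each statement's English description precedes it below -/
import Mathlib

section
/- Suppose |b̂_{i,s} − bᵢ| ≤ Uᵢ(s) holds for all i and s, let j = argmaxᵢ (Aᵢ x − b̂_{i,T_i} + Uᵢ(T_i)), and suppose A_j x − b̂_{j,T_j} − U_j(T_j) ≤ 0 and U_j(T_j) < ε₂/2. Then Aᵢ x ≤ bᵢ + ε₂ for every constraint i. -/
/-- On the good event, if `j` maximizes the UCB index, is not certifiably
violated (`A_j x − b̂_{j,T_j} − U_j(T_j) ≤ 0`), and `U_j(T_j) < ε₂/2`, then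
every constraint is violated by at most `ε₂`: `Aᵢ x ≤ bᵢ + ε₂` for all `i`. -/
theorem stmt13 (n m : ℕ) (A : Fin m → Fin n → ℝ) (b : Fin m → ℝ)
    (bhat : Fin m → ℕ → ℝ) (U : Fin m → ℕ → ℝ) (T : Fin m → ℕ)
    (x : Fin n → ℝ) (j : Fin m) (ε₂ : ℝ)
    (hgood : ∀ i, ∀ s : ℕ, 1 ≤ s → |bhat i s - b i| ≤ U i s)
    (hT : ∀ i, 1 ≤ T i)
    (hmax : ∀ i, (∑ l, A i l * x l) - bhat i (T i) + U i (T i) ≤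
      (∑ l, A j l * x l) - bhat j (T j) + U j (T j))
    (hnotviol : (∑ l, A j l * x l) - bhat j (T j) - U j (T j) ≤ 0)
    (hsmall : U j (T j) < ε₂ / 2) :
    ∀ i, (∑ l, A i l * x l) ≤ b i + ε₂ := by
  intro i
  have h1 := hmax i
  have h2 := abs_le.mp (hgood i (T i) (hT i))
  linarith
end

section
/- Suppose |b̂_{i,s} − bᵢ| ≤ Uᵢ(s) holds for all i and s. If at round k the UCB subroutine samples constraint i at time t (so i has the largest index and none of the stopping conditions with threshold ε₂/2 hold), then 2Uᵢ(T_i(t)) ≥ max{ |Vᵢ(k)|, V*(k) − Vᵢ(k), ε₂/2 }, where Vᵢ(k) = Aᵢ x^{(k)} − bᵢ and V*(k) = maxᵢ Vᵢ(k). -/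
/-- On the good event, if constraint `i` is sampled at time `t` in round `k`
(i.e. `i` has the largest UCB index and no stopping condition holds), then
`2 Uᵢ(Tᵢ(t)) ≥ max { |Vᵢ(k)|, V*(k) − Vᵢ(k), ε₂/2 }`, where
`Vᵢ(k) = Aᵢ x^{(k)} − bᵢ` and `V*(k) = maxᵢ Vᵢ(k)`. -/
theorem stmt14 (n m : ℕ) (A : Fin m → Fin n → ℝ) (b : Fin m → ℝ)
    (bhat : Fin m → ℕ → ℝ) (U : Fin m → ℕ → ℝ) (T : Fin m → ℕ)
    (x : Fin n → ℝ) (i : Fin m) (ε₂ : ℝ) (Vstar : ℝ)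
    (hgood : ∀ i', ∀ s : ℕ, 1 ≤ s → |bhat i' s - b i'| ≤ U i' s)
    (hT : ∀ i', 1 ≤ T i')
    (hVstar : IsGreatest (Set.range fun i' => (∑ l, A i' l * x l) - b i') Vstar)
    (hmax : ∀ i', (∑ l, A i' l * x l) - bhat i' (T i') + U i' (T i') ≤
      (∑ l, A i l * x l) - bhat i (T i) + U i (T i))
    (hnostop2 : ¬(0 < (∑ l, A i l * x l) - bhat i (T i) - U i (T i)))
    (hnostop3 : ¬((∑ l, A i l * x l) - bhat i (T i) + U i (T i) < 0))
    (hnostop4 : ¬(U i (T i) < ε₂ / 2)) :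
    max (max |(∑ l, A i l * x l) - b i| (Vstar - ((∑ l, A i l * x l) - b i)))
      (ε₂ / 2) ≤ 2 * U i (T i) := by

  push_neg at hnostop2 hnostop3 hnostop4
  have hU : |bhat i (T i) - b i| ≤ U i (T i) := hgood i (T i) (hT i)
  have hU1 := abs_le.mp hU
  have hU0 : 0 ≤ U i (T i) := (abs_nonneg _).trans hU
  obtain ⟨j, hj⟩ := hVstar.1
  have hjle := hmax j
  have hUj : |bhat j (T j) - b j| ≤ U j (T j) := hgood j (T j) (hT j)
  have hUj1 := abs_le.mp hUj
  apply max_le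
  · apply max_le
    · rw [abs_le]; constructor <;> nlinarith [hU1.1, hU1.2]
    · simp only [] at hj; nlinarith [hU1.1, hU1.2, hUj1.1, hUj1.2, hj.le, hj.ge]
  · linarith
end

section
/- For constants c > 0 and 0 < δ ≤ 1, if t ≥ 1 satisfies (1/t) · log(log(3t/2)/δ) ≥ c, then t ≤ (1/c) · log(2 log(3/(2cδ))/δ). -/
lemma aux_mul_exp_le (x : ℝ) : Real.exp 1 * x ≤ Real.exp x := by
  rcases le_or_gt x 0 with hx | hx
  · have : Real.exp 1 * x ≤ 0 := mul_nonpos_of_nonneg_of_nonpos (Real.exp_pos 1).le hx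
    exact this.trans (Real.exp_pos x).le
  · have h1 : Real.log (Real.exp 1 * x) ≤ x := by
      rw [Real.log_mul (Real.exp_ne_zero 1) hx.ne', Real.log_exp]
      have := Real.log_le_sub_one_of_pos hx
      linarith
    calc Real.exp 1 * x = Real.exp (Real.log (Real.exp 1 * x)) := by
          rw [Real.exp_log (by positivity)]
      _ ≤ Real.exp x := Real.exp_le_exp.mpr h1

lemma aux_log_le_div_e (z : ℝ) (hz : 0 < z) : Real.log z ≤ z / Real.exp 1 := by
  have h := Real.log_le_sub_one_of_pos (show 0 < z / Real.exp 1 by positivity)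
  rw [Real.log_div hz.ne' (Real.exp_ne_zero 1), Real.log_exp] at h
  linarith

/-- Inversion bound: for `c > 0` and `0 < δ ≤ 1`, if `t ≥ 1` satisfies
`(1/t) log(log(3t/2)/δ) ≥ c`, then `t ≤ (1/c) log(2 log(3/(2cδ))/δ)`. -/
theorem stmt15 (c δ t : ℝ) (hc : 0 < c) (hδ0 : 0 < δ) (hδ1 : δ ≤ 1) (ht : 1 ≤ t)
    (h : c ≤ (1 / t) * Real.log (Real.log (3 * t / 2) / δ)) :
    t ≤ (1 / c) * Real.log (2 * Real.log (3 / (2 * c * δ)) / δ) := by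
  have ht0 : 0 < t := by linarith
  have hy1 : 1 < 3 * t / 2 := by linarith
  have hly : 0 < Real.log (3 * t / 2) := Real.log_pos hy1
  have hz : 0 < Real.log (3 * t / 2) / δ := by positivity
  rw [one_div, inv_mul_eq_div, le_div_iff₀ ht0] at h
  have hct : c * t ≤ Real.log (Real.log (3 * t / 2) / δ) := by linarith
  have hexp : δ * Real.exp (c * t) ≤ Real.log (3 * t / 2) := by
    have h1 := (Real.le_log_iff_exp_le hz).mp hct
    rw [le_div_iff₀ hδ0] at h1
    linarith
  set E := Real.exp 1 with hE
  have hE0 : (0:ℝ) < E := Real.exp_pos 1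
  have hE2 : (2:ℝ) < E := by
    have := Real.exp_one_gt_d9; linarith
  -- sqrt step
  set s := Real.sqrt (3 * t / 2) with hs
  have hs0 : 0 < s := Real.sqrt_pos.mpr (by linarith)
  have hs2 : s ^ 2 = 3 * t / 2 := Real.sq_sqrt (by linarith)
  clear_value s
  have hlogs : Real.log (3 * t / 2) = 2 * Real.log s := by
    rw [← hs2, Real.log_pow]; push_cast; ring
  have hls : Real.log s ≤ s / E := aux_log_le_div_e s hs0
  have hee : δ * (E * (c * t)) ≤ δ * Real.exp (c * t) :=
    mul_le_mul_of_nonneg_left (aux_mul_exp_le (c * t)) hδ0.le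
  -- δ * E * c * t ≤ 2 * s / E, with t = 2 s^2 / 3
  have hchain : δ * E * c * t ≤ 2 * s / E := by
    have := hexp
    rw [hlogs] at this
    calc δ * E * c * t ≤ δ * Real.exp (c * t) := by nlinarith
      _ = 2 * Real.log s - (2 * Real.log s - δ * Real.exp (c * t)) := by ring
      _ ≤ 2 * (s / E) := by nlinarith
      _ = 2 * s / E := by ring
  have hkey : s * c * δ * E ^ 2 ≤ 3 := by
    have ht' : t = 2 * s ^ 2 / 3 := by rw [hs2]; ring
    rw [ht'] at hchain
    have h3 := (le_div_iff₀ hE0).mp hchain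
    nlinarith [h3, hs0, mul_pos hs0 hs0]
  have hsq : 3 * t / 2 ≤ (3 / (2 * c * δ)) ^ 2 := by
    rw [← hs2, div_pow, le_div_iff₀ (by positivity : (0:ℝ) < (2 * c * δ) ^ 2)]
    have hp : 0 < s * c * δ := by positivity
    have hk2 := pow_le_pow_left₀ (by positivity : (0:ℝ) ≤ s * c * δ * E ^ 2) hkey 2
    have hEsq : 4 ≤ E ^ 2 := by nlinarith [hE2]
    have hE4 : 16 ≤ E ^ 4 := by nlinarith [hEsq]
    have h1 : (s * c * δ) ^ 2 * 16 ≤ (s * c * δ) ^ 2 * E ^ 4 :=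
      mul_le_mul_of_nonneg_left hE4 (sq_nonneg _)
    have h2 : (s * c * δ) ^ 2 * E ^ 4 ≤ 9 := by
      calc (s * c * δ) ^ 2 * E ^ 4 = (s * c * δ * E ^ 2) ^ 2 := by ring
        _ ≤ 3 ^ 2 := hk2
        _ = 9 := by norm_num
    calc s ^ 2 * (2 * c * δ) ^ 2 = 4 * (s * c * δ) ^ 2 := by ring
      _ ≤ 9 := by linarith
      _ = 3 ^ 2 := by norm_num
  have hAlog : Real.log (3 * t / 2) ≤ 2 * Real.log (3 / (2 * c * δ)) := by
    calc Real.log (3 * t / 2) ≤ Real.log ((3 / (2 * c * δ)) ^ 2) :=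
          Real.log_le_log (by linarith) hsq
      _ = 2 * Real.log (3 / (2 * c * δ)) := by rw [Real.log_pow]; push_cast; ring
  have hfin : c * t ≤ Real.log (2 * Real.log (3 / (2 * c * δ)) / δ) := by
    refine hct.trans (Real.log_le_log hz ?_)
    gcongr
  rw [one_div, inv_mul_eq_div, le_div_iff₀ hc]
  linarith
end

section
/- Under the same setting (finite S, optimal x* ∈ S for c, estimate ĉ with |(x−y)ᵀ(ĉ−c)| ≤ ε/λ for all x,y ∈ S, λ = 10), every point s ∈ S with cᵀ(x* − s) > ε satisfies ĉᵀs < ĉᵀx̂ − ε/2 − 2ε/λ, where x̂ maximizes ĉᵀx over S; hence all points more than ε suboptimal are eliminated. -/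
/-- Successive elimination removes all far-from-optimal points: under the same
setting as the retention lemma (`λ = 10`), every `s ∈ S` with
`cᵀ(x* − s) > ε` satisfies `ĉᵀs < ĉᵀx̂ − ε/2 − 2ε/λ` and hence is eliminated. -/
theorem stmt17 (n : ℕ) (S : Finset (Fin n → ℝ)) (c chat xstar xhat s : Fin n → ℝ)
    (ε : ℝ) (hε : 0 < ε)
    (hxstar : xstar ∈ S)
    (hopt : ∀ y ∈ S, (∑ i, c i * y i) ≤ ∑ i, c i * xstar i)
    (hacc : ∀ x ∈ S, ∀ y ∈ S,
      |∑ i, (x i - y i) * (chat i - c i)| ≤ ε / 10)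
    (hxhat : xhat ∈ S)
    (hhatopt : ∀ y ∈ S, (∑ i, chat i * y i) ≤ ∑ i, chat i * xhat i)
    (hs : s ∈ S) (hfar : ε < ∑ i, c i * (xstar i - s i)) :
    (∑ i, chat i * s i) < (∑ i, chat i * xhat i) - ε / 2 - 2 * ε / 10 := by
  have h1 := hacc xstar hxstar s hs
  rw [abs_le] at h1
  have key : (∑ i, chat i * xstar i) - ∑ i, chat i * s i
      = (∑ i, c i * (xstar i - s i)) + ∑ i, (xstar i - s i) * (chat i - c i) := by
    rw [← Finset.sum_sub_distrib, ← Finset.sum_add_distrib]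
    congr 1; ext i; ring
  have h2 := hhatopt xstar hxstar
  linarith [h1.1, h1.2]
end
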